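/- arXiv:1601.05383 — 3 statements merged into one kernel-verified Lean document; each statement's English description precedes it below -/
import Mathlib

section
/- Let A be a commutative ring and B a commutative A-algebra. Let φ : B → A be an A-linear map such that the induced map B → Hom_A(B, A), x ↦ (y ↦ φ(x·y)), is bijective (i.e. φ determines a B-linear nondegenerate quadratic form q : B ≅ Hom_A(B, A) with q(x)(y) = φ(x·y)). Then for every ideal I of B, the orthogonal I^⊥ = {x ∈ B : φ(x·y) = 0 for all y ∈ I} of I with respect to this form is equal to the annihilator Ann_B(I) = {x ∈ B : x·y = 0 for all y ∈ I}. -/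
/-- **Sublemma (NilpLagr).** Let `B` be a commutative `A`-algebra and `φ : B → A` an
`A`-linear map such that `x ↦ (y ↦ φ (x * y))` is a bijection `B ≃ Hom_A(B, A)`
(i.e. `φ` defines a `B`-linear nondegenerate quadratic form on `B` over `A`).
Then for every ideal `I ⊆ B`, the orthogonal of `I` with respect to this form
coincides with the annihilator of `I` in `B`. -/
theorem orthogonal_eq_annihilator_of_nondegenerate
    (A B : Type*) [CommRing A] [CommRing B] [Algebra A B]
    (φ : B →ₗ[A] A)
    (hq : Function.Bijective fun x : B => φ ∘ₗ (LinearMap.mul A B x)) :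
    ∀ (I : Ideal B) (x : B), (∀ y ∈ I, φ (x * y) = 0) ↔ (∀ y ∈ I, x * y = 0) := by
  intro I x
  constructor
  · intro h y hy
    have := hq.1 (a₁ := x * y) (a₂ := 0)
    simp only at this
    apply this
    ext z
    simp only [LinearMap.comp_apply, LinearMap.mul_apply', mul_assoc, zero_mul, map_zero]
    simpa using h (y * z) (I.mul_mem_right z hy)
  · intro h y hy
    rw [h y hy, map_zero]
end

section
/- Let A be a commutative Noetherian ring, R a commutative A-algebra, and M an R-module which is finitely generated as an A-module. Then the quotient ring R / Ann_R(M) is finitely generated as an A-module. -/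
/-- Let `A` be a commutative Noetherian ring, `R` a commutative `A`-algebra, and `M` an
`R`-module which is finitely generated as an `A`-module.  Then `R / Ann_R(M)` is finitely
generated as an `A`-module. -/
theorem quotient_annihilator_finite_over_noetherian_base
    (A R M : Type*) [CommRing A] [IsNoetherianRing A] [CommRing R] [Algebra A R]
    [AddCommGroup M] [Module R M] [Module A M] [IsScalarTower A R M]
    [Module.Finite A M] :
    Module.Finite A (R ⧸ Module.annihilator R M) := by
  haveI : IsNoetherian A M := isNoetherian_of_isNoetherianRing_of_finite A M
  let f : R →ₗ[A] (M →ₗ[A] M) :=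
    { toFun := fun r =>
        { toFun := fun m => r • m
          map_add' := fun m n => smul_add r m n
          map_smul' := fun a m => (smul_comm a r m).symm }
      map_add' := fun r s => by ext m; exact add_smul r s m
      map_smul' := fun a r => by ext m; exact smul_assoc a r m }
  have hker : LinearMap.ker f = (Module.annihilator R M).restrictScalars A := by
    ext r
    simp only [LinearMap.mem_ker, Submodule.restrictScalars_mem]
    rw [Module.mem_annihilator]
    constructor
    · intro h m; exact DFunLike.congr_fun h m
    · intro h; ext m; exact h m
  let g : (R ⧸ Module.annihilator R M) →ₗ[A] (M →ₗ[A] M) :=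
    Submodule.liftQ ((Module.annihilator R M).restrictScalars A) f (le_of_eq hker.symm)
  have hg : Function.Injective g := by
    rw [← LinearMap.ker_eq_bot]
    show LinearMap.ker (Submodule.liftQ ((Module.annihilator R M).restrictScalars A) f (le_of_eq hker.symm)) = ⊥
    rw [Submodule.ker_liftQ, hker]
    exact le_bot_iff.mp (Submodule.map_le_iff_le_comap.mpr (by rw [Submodule.comap_bot, Submodule.ker_mkQ]))
  exact Module.Finite.of_injective g hg
end

section
/- Let C be a category with zero morphisms, S : C → C a functor, and p : Id_C → S, s₀ : S → Id_C, s₁ : S → Id_C natural transformations such that s₀_X ∘ p_X = id_X and s₁_X ∘ p_X = id_X for every object X. Suppose A is an S-invariant object, i.e. p_A : A → S(A) is an isomorphism, and B is an S-contractable object, i.e. there exists a morphism h : B → S(B) with s₀_B ∘ h = id_B and s₁_B ∘ h = 0. Then every morphism f : B → A is zero. -/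
open CategoryTheory

/-- Semi-orthogonality of `S`-contractable and `S`-invariant objects: given an
endofunctor `S` with natural transformations `p : Id ⟶ S`, `s₀ s₁ : S ⟶ Id` satisfying
`s₀ ∘ p = id` and `s₁ ∘ p = id`, if `A` is `S`-invariant (`p_A` is an isomorphism) and
`B` is `S`-contractable (there is `h : B ⟶ S B` with `s₀ ∘ h = id` and `s₁ ∘ h = 0`),
then every morphism `B ⟶ A` is zero. -/
theorem hom_contractable_to_invariant_eq_zero
    {C : Type*} [Category C] [Limits.HasZeroMorphisms C]
    (S : C ⥤ C) (p : 𝟭 C ⟶ S) (s₀ s₁ : S ⟶ 𝟭 C)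
    (hp0 : ∀ X : C, p.app X ≫ s₀.app X = 𝟙 X)
    (hp1 : ∀ X : C, p.app X ≫ s₁.app X = 𝟙 X)
    (A B : C) (hA : IsIso (p.app A))
    (h : B ⟶ S.obj B) (h0 : h ≫ s₀.app B = 𝟙 B) (h1 : h ≫ s₁.app B = 0)
    (f : B ⟶ A) : f = 0 := by
  have hs : s₀.app A = s₁.app A := by
    have := hp0 A
    have := hp1 A
    calc s₀.app A = inv (p.app A) ≫ (p.app A ≫ s₀.app A) := by simp
    _ = inv (p.app A) ≫ (p.app A ≫ s₁.app A) := by rw [hp0, hp1]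
    _ = s₁.app A := by simp
  have nat0 : S.map f ≫ s₀.app A = s₀.app B ≫ f := s₀.naturality f
  have nat1 : S.map f ≫ s₁.app A = s₁.app B ≫ f := s₁.naturality f
  calc f = 𝟙 B ≫ f := by simp
  _ = h ≫ s₀.app B ≫ f := by rw [← h0, Category.assoc]
  _ = h ≫ S.map f ≫ s₀.app A := by rw [nat0]
  _ = h ≫ S.map f ≫ s₁.app A := by rw [hs]
  _ = (h ≫ s₁.app B) ≫ f := by rw [nat1, Category.assoc]
  _ = 0 := by rw [h1, Limits.zero_comp]
end
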